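/- Let A be a compact self-adjoint operator on a Hilbert space H, λ ≠ 0 real, and f ∈ H. Then the equation λu − Au = f has a solution u ∈ H if and only if f is orthogonal to every v ∈ H satisfying Av = λv. -/

import Mathlib

open scoped InnerProductSpace

theorem compact_selfAdjoint_solvability {H : Type*} [NormedAddCommGroup H]
    [InnerProductSpace ℂ H] [CompleteSpace H]
    (A : H →L[ℂ] H) (hA : IsCompactOperator A) (hsa : IsSelfAdjoint A)
    (lam : ℝ) (hlam : lam ≠ 0) (f : H) :
    (∃ u : H, (lam : ℂ) • u - A u = f) ↔
      ∀ v : H, A v = (lam : ℂ) • v → inner ℂ f v = (0 : ℂ) := by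
  set T : H →L[ℂ] H := (lam : ℂ) • ContinuousLinearMap.id ℂ H - A with hTdef
  have hTapp : ∀ u : H, T u = (lam : ℂ) • u - A u := fun u => rfl
  have hsym : ∀ x y : H, ⟪T x, y⟫_ℂ = ⟪x, T y⟫_ℂ := by
    intro x y
    have hsymA : ⟪A x, y⟫_ℂ = ⟪x, A y⟫_ℂ := hsa.isSymmetric x y
    simp only [hTapp, inner_sub_left, inner_sub_right, inner_smul_left, inner_smul_right,
      Complex.conj_ofReal]
    rw [hsymA]
  set K : Submodule ℂ H := LinearMap.ker (T : H →ₗ[ℂ] H) with hKdef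
  have hKmem : ∀ v : H, v ∈ K ↔ A v = (lam : ℂ) • v := by
    intro v
    rw [LinearMap.mem_ker, ContinuousLinearMap.coe_coe, hTapp, sub_eq_zero]
    constructor <;> intro h <;> exact h.symm
  have hKclosed : IsClosed (K : Set H) := ContinuousLinearMap.isClosed_ker T
  constructor
  · rintro ⟨u, rfl⟩ v hv
    have h1 : ⟪A u, v⟫_ℂ = (lam : ℂ) * ⟪u, v⟫_ℂ := by
      have hsymA : ⟪A u, v⟫_ℂ = ⟪u, A v⟫_ℂ := hsa.isSymmetric u v
      rw [hsymA, hv, inner_smul_right]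
    rw [inner_sub_left, inner_smul_left, Complex.conj_ofReal, h1, sub_self]
  · intro hf
    -- f ∈ Kᗮ
    have hfK : f ∈ Kᗮ := by
      rw [Submodule.mem_orthogonal]
      intro v hv
      have := hf v ((hKmem v).mp hv)
      have h2 : ⟪v, f⟫_ℂ = starRingEnd ℂ ⟪f, v⟫_ℂ := (inner_conj_symm v f).symm
      rw [h2, this, map_zero]
    -- (range T)ᗮ = K
    have hrange : (LinearMap.range (T : H →ₗ[ℂ] H))ᗮ = K := by
      ext v
      rw [Submodule.mem_orthogonal]
      constructor
      · intro h
        have h0 : ∀ u : H, ⟪u, T v⟫_ℂ = 0 := by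
          intro u
          rw [← hsym u v]
          exact h (T u) ⟨u, rfl⟩
        have : T v = 0 := by
          have := h0 (T v)
          rwa [inner_self_eq_zero] at this
        exact this
      · intro hv u hu
        obtain ⟨w, rfl⟩ := hu
        rw [ContinuousLinearMap.coe_coe, hsym w v, ← ContinuousLinearMap.coe_coe, LinearMap.mem_ker.mp hv, inner_zero_right]
    -- key coercivity bound on Kᗮ
    have hbound : ∃ c : ℝ, 0 < c ∧ ∀ u ∈ Kᗮ, c * ‖u‖ ≤ ‖T u‖ := by
      by_contra hcon
      push_neg at hcon
      have hcon' : ∀ n : ℕ, ∃ u, u ∈ Kᗮ ∧ ‖T u‖ < (1 / (n + 1)) * ‖u‖ := by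
        intro n
        exact hcon (1 / (n + 1)) (by positivity)
      choose u huK hulen using hcon'
      have hune : ∀ n, u n ≠ 0 := by
        intro n h0
        have := hulen n
        rw [h0] at this
        simp at this
      set w : ℕ → H := fun n => (‖u n‖ : ℂ)⁻¹ • u n with hwdef
      have hwnorm : ∀ n, ‖w n‖ = 1 := by
        intro n
        have : ‖u n‖ ≠ 0 := norm_ne_zero_iff.mpr (hune n)
        simp [hwdef, norm_smul, inv_mul_cancel₀ this]
      have hwK : ∀ n, w n ∈ Kᗮ := fun n => Kᗮ.smul_mem _ (huK n)
      have hTw : ∀ n, ‖T (w n)‖ < 1 / (n + 1) := by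
        intro n
        have hn : (0:ℝ) < ‖u n‖ := norm_pos_iff.mpr (hune n)
        have : T (w n) = (‖u n‖ : ℂ)⁻¹ • T (u n) := by rw [hwdef]; simp
        rw [this, norm_smul]
        have h1 : ‖((‖u n‖ : ℂ))⁻¹‖ = ‖u n‖⁻¹ := by
          rw [norm_inv, Complex.norm_real, Real.norm_of_nonneg (norm_nonneg _)]
        rw [h1]
        calc ‖u n‖⁻¹ * ‖T (u n)‖ < ‖u n‖⁻¹ * ((1 / (n + 1)) * ‖u n‖) := by
              exact mul_lt_mul_of_pos_left (hulen n) (by positivity)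
          _ = 1 / (n + 1) := by field_simp
      have hTw0 : Filter.Tendsto (fun n => T (w n)) Filter.atTop (nhds 0) := by
        rw [tendsto_iff_norm_sub_tendsto_zero]
        simp only [sub_zero]
        have h1 : Filter.Tendsto (fun n : ℕ => 1 / ((n : ℝ) + 1)) Filter.atTop (nhds 0) :=
          tendsto_one_div_add_atTop_nhds_zero_nat
        exact squeeze_zero (fun n => norm_nonneg _) (fun n => (hTw n).le) h1
      -- compactness: extract convergent subsequence of A ∘ w
      have hcompact : IsCompact (closure (A '' Metric.closedBall 0 1)) := by
        have h := IsCompactOperator.isCompact_closure_image_closedBall (𝕜₁ := ℂ)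
          (f := (A : H →ₗ[ℂ] H)) (by exact hA) 1
        exact h
      have hmem : ∀ n, A (w n) ∈ closure (A '' Metric.closedBall 0 1) := by
        intro n
        apply subset_closure
        exact ⟨w n, by simp [Metric.mem_closedBall, (hwnorm n).le, dist_zero_right], rfl⟩
      obtain ⟨y, -, φ, hφ, hy⟩ := hcompact.tendsto_subseq hmem
      -- w (φ n) converges
      have hwconv : Filter.Tendsto (fun n => w (φ n)) Filter.atTop
          (nhds ((lam : ℂ)⁻¹ • y)) := by
        have heq : ∀ n, w (φ n) = (lam : ℂ)⁻¹ • (T (w (φ n)) + A (w (φ n))) := by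
          intro n
          rw [hTapp, sub_add_cancel, smul_smul,
            inv_mul_cancel₀ (by exact_mod_cast hlam : (lam : ℂ) ≠ 0), one_smul]
        rw [funext heq]
        apply Filter.Tendsto.const_smul
        have h0 : Filter.Tendsto (fun n => T (w (φ n))) Filter.atTop (nhds 0) :=
          hTw0.comp hφ.tendsto_atTop
        simpa using h0.add hy
      set z : H := (lam : ℂ)⁻¹ • y with hzdef
      have hznorm : ‖z‖ = 1 := by
        have := (continuous_norm.tendsto z).comp hwconv
        have h1 : Filter.Tendsto (fun n => ‖w (φ n)‖) Filter.atTop (nhds ‖z‖) := this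
        have h2 : (fun n => ‖w (φ n)‖) = fun _ => (1:ℝ) := funext fun n => hwnorm (φ n)
        rw [h2] at h1
        exact tendsto_nhds_unique h1 tendsto_const_nhds
      have hzK' : z ∈ Kᗮ := by
        have : IsClosed (Kᗮ : Set H) := K.isClosed_orthogonal
        exact this.mem_of_tendsto hwconv (Filter.Eventually.of_forall fun n => hwK (φ n))
      have hzK : z ∈ K := by
        rw [LinearMap.mem_ker]
        have h1 : Filter.Tendsto (fun n => T (w (φ n))) Filter.atTop (nhds (T z)) :=
          (T.continuous.tendsto z).comp hwconv
        have h2 : Filter.Tendsto (fun n => T (w (φ n))) Filter.atTop (nhds 0) :=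
          hTw0.comp hφ.tendsto_atTop
        exact tendsto_nhds_unique h1 h2
      have : z = 0 := by
        have := (Submodule.mem_orthogonal K z).mp hzK' z hzK
        rwa [inner_self_eq_zero] at this
      rw [this, norm_zero] at hznorm
      exact one_ne_zero hznorm.symm
    obtain ⟨c, hc, hcb⟩ := hbound
    -- f ∈ closure (range T)
    have hfclos : f ∈ closure ((LinearMap.range (T : H →ₗ[ℂ] H) : Submodule ℂ H) : Set H) := by
      have h1 : Kᗮ = (LinearMap.range (T : H →ₗ[ℂ] H)).topologicalClosure := by
        rw [← hrange, Submodule.orthogonal_orthogonal_eq_closure]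
      have := h1 ▸ hfK
      exact this
    rw [mem_closure_iff_seq_limit] at hfclos
    obtain ⟨g, hg, hglim⟩ := hfclos
    choose u hu using fun n => hg n
    haveI : CompleteSpace K := hKclosed.completeSpace_coe
    set v : ℕ → H := fun n => u n - (K.orthogonalProjectionOnto (u n) : H) with hvdef
    have hvK : ∀ n, v n ∈ Kᗮ := fun n => Submodule.sub_starProjection_mem_orthogonal (K := K) (u n)
    have hTv : ∀ n, T (v n) = g n := by
      intro n
      have hk : T ((K.orthogonalProjectionOnto (u n) : H)) = 0 :=
        LinearMap.mem_ker.mp (K.orthogonalProjectionOnto (u n)).2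
      rw [hvdef]
      simp only [map_sub, hk, sub_zero]
      exact hu n
    have hcauchy : CauchySeq v := by
      rw [Metric.cauchySeq_iff]
      intro ε hε
      have hgc : CauchySeq g := hglim.cauchySeq
      rw [Metric.cauchySeq_iff] at hgc
      obtain ⟨N, hN⟩ := hgc (c * ε) (by positivity)
      refine ⟨N, fun m hm n hn => ?_⟩
      have hsub : v m - v n ∈ Kᗮ := Kᗮ.sub_mem (hvK m) (hvK n)
      have := hcb _ hsub
      rw [map_sub, hTv m, hTv n] at this
      have hd : dist (v m) (v n) = ‖v m - v n‖ := dist_eq_norm _ _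
      rw [hd]
      have hgd : ‖g m - g n‖ < c * ε := by
        rw [← dist_eq_norm]; exact hN m hm n hn
      nlinarith [norm_nonneg (v m - v n)]
    obtain ⟨w₀, hw₀⟩ := cauchySeq_tendsto_of_complete hcauchy
    refine ⟨w₀, ?_⟩
    have h1 : Filter.Tendsto (fun n => T (v n)) Filter.atTop (nhds (T w₀)) :=
      (T.continuous.tendsto w₀).comp hw₀
    have h2 : Filter.Tendsto (fun n => T (v n)) Filter.atTop (nhds f) := by
      rw [funext hTv]; exact hglim
    have := tendsto_nhds_unique h1 h2
    rw [← hTapp]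
    exact this
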